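/- Fix θ ∈ (0,1), let d_θ be the standard metric on Ω = {1,...,d}^ℕ, and let log J : Ω → ℝ be Lipschitz with respect to d_θ and normalized (∑_{a=1}^d J(a⌢x) = 1 for all x). Then there exist δ > 0, t ∈ ℕ with t ≥ 1, and α ∈ (0,1) such that, setting d(x,y) = min{1, δ⁻¹ d_θ(x,y)} (a metric equivalent to d_θ), for all x, y ∈ Ω the 1-Wasserstein distance for the metric d satisfies W₁((ℒ*)ᵗ(δ_x), (ℒ*)ᵗ(δ_y)) ≤ α · d(x,y), where W₁(μ,ν) = inf over couplings Γ of μ and ν of ∫ d(x',y') dΓ(x',y'). -/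

import Mathlib

open MeasureTheory Finset

/-- The metric `d_θ` on `Ω = {1,…,d}^ℕ`: `d_θ(x,y) = θ^N` where `N` is the first index
at which `x` and `y` disagree, and `d_θ(x,y) = 0` if `x = y`. -/
noncomputable def dTheta {d : ℕ} (θ : ℝ) (x y : ℕ → Fin d) : ℝ :=
  letI := Classical.dec (x = y)
  if h : x = y then 0 else θ ^ Nat.find (Function.ne_iff.mp h)

/-- Prepending a symbol: `a⌢x`. -/
def cons {d : ℕ} (a : Fin d) (x : ℕ → Fin d) : ℕ → Fin d :=
  fun n => match n with
  | 0 => a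
  | m + 1 => x m

/-- The dual `ℒ*` of the Ruelle operator of the potential `log J`, acting on Borel
measures on `Ω = {1,…,d}^ℕ`: it satisfies `∫ ψ d(ℒ*ν) = ∫ ℒψ dν` where
`(ℒψ)(x) = ∑_a J(a⌢x) ψ(a⌢x)`; on a Dirac mass, `ℒ*(δ_x) = ∑_a J(a⌢x) δ_{a⌢x}`. -/
noncomputable def dualRuelle {d : ℕ} (J : (ℕ → Fin d) → ℝ)
    (ν : Measure (ℕ → Fin d)) : Measure (ℕ → Fin d) :=
  ν.bind (fun x => ∑ a : Fin d, ENNReal.ofReal (J (cons a x)) • Measure.dirac (cons a x))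

/-- The optimal transport cost (for the cost `c`) between two measures on `Ω`:
the infimum over couplings `Γ` of `∫ c dΓ`.  For `c` a metric `d` this is the
`1`-Wasserstein distance `W₁`. -/
noncomputable def Wcost {d : ℕ} (c : ((ℕ → Fin d) × (ℕ → Fin d)) → ℝ)
    (μ ν : Measure (ℕ → Fin d)) : ℝ :=
  sInf {r : ℝ | ∃ Γ : Measure ((ℕ → Fin d) × (ℕ → Fin d)),
    Γ.map Prod.fst = μ ∧ Γ.map Prod.snd = ν ∧ r = ∫ p, c p ∂Γ}

section basic
variable {d : ℕ} {θ : ℝ}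

@[simp] lemma cons_zero (a : Fin d) (x : ℕ → Fin d) : cons a x 0 = a := rfl
@[simp] lemma cons_succ (a : Fin d) (x : ℕ → Fin d) (m : ℕ) : cons a x (m+1) = x m := rfl

lemma dTheta_self (x : ℕ → Fin d) : dTheta θ x x = 0 := by simp [dTheta]

lemma dTheta_nonneg (hθ : 0 ≤ θ) (x y : ℕ → Fin d) : 0 ≤ dTheta θ x y := by
  unfold dTheta; split
  · exact le_refl 0
  · exact pow_nonneg hθ _

lemma dTheta_le_one (hθ0 : 0 ≤ θ) (hθ1 : θ ≤ 1) (x y : ℕ → Fin d) : dTheta θ x y ≤ 1 := by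
  unfold dTheta; split
  · exact zero_le_one
  · exact pow_le_one₀ hθ0 hθ1

lemma cons_inj_iff {a : Fin d} {x y : ℕ → Fin d} : cons a x = cons a y ↔ x = y := by
  constructor
  · intro h; funext n; have := congrFun h (n+1); simpa using this
  · rintro rfl; rfl

lemma dTheta_cons (a : Fin d) (x y : ℕ → Fin d) :
    dTheta θ (cons a x) (cons a y) = θ * dTheta θ x y := by
  unfold dTheta
  by_cases h : x = y
  · subst h; simp
  · have h' : ¬ cons a x = cons a y := fun hc => h (cons_inj_iff.mp hc)
    rw [dif_neg h', dif_neg h]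
    have key : Nat.find (Function.ne_iff.mp h') = Nat.find (Function.ne_iff.mp h) + 1 := by
      rw [Nat.find_eq_iff]
      constructor
      · have := Nat.find_spec (Function.ne_iff.mp h)
        simpa using this
      · intro n hn
        match n with
        | 0 => simp
        | m+1 =>
          have hm : m < Nat.find (Function.ne_iff.mp h) := by omega
          have := Nat.find_min (Function.ne_iff.mp h) hm
          simpa using this
    rw [key, pow_succ]; ring

lemma dTheta_le_of_agree (hθ0 : 0 ≤ θ) (hθ1 : θ ≤ 1) {x y : ℕ → Fin d} {n : ℕ}
    (h : ∀ i < n, x i = y i) : dTheta θ x y ≤ θ ^ n := by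
  unfold dTheta
  split
  · exact pow_nonneg hθ0 n
  · rename_i hne
    apply pow_le_pow_of_le_one hθ0 hθ1
    by_contra hlt
    push_neg at hlt
    exact Nat.find_spec (Function.ne_iff.mp hne) (h _ hlt)

end basic

section words
variable {d : ℕ}

/-- Prepend a word of length `t`. -/
def wcons : (t : ℕ) → (Fin t → Fin d) → (ℕ → Fin d) → (ℕ → Fin d)
  | 0, _, x => x
  | t+1, w, x => cons (w 0) (wcons t (fun i => w i.succ) x)

/-- Weight of a word: `J^t(w⌢x)`. -/
noncomputable def wP (J : (ℕ → Fin d) → ℝ) : (t : ℕ) → (Fin t → Fin d) → (ℕ → Fin d) → ℝ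
  | 0, _, _ => 1
  | t+1, w, x => J (wcons (t+1) w x) * wP J t (fun i => w i.succ) x

variable (J : (ℕ → Fin d) → ℝ) (θ : ℝ)

@[simp] lemma wcons_zero (w : Fin 0 → Fin d) (x : ℕ → Fin d) : wcons 0 w x = x := rfl

lemma wcons_cons (t : ℕ) (a : Fin d) (w : Fin t → Fin d) (x : ℕ → Fin d) :
    wcons (t+1) (Fin.cons a w) x = cons a (wcons t w x) := by
  show _root_.cons ((Fin.cons a w : Fin (t+1) → Fin d) 0)
    (wcons t (fun i => (Fin.cons a w : Fin (t+1) → Fin d) i.succ) x) = _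
  simp only [Fin.cons_zero, Fin.cons_succ]

lemma wP_cons (t : ℕ) (a : Fin d) (w : Fin t → Fin d) (x : ℕ → Fin d) :
    wP J (t+1) (Fin.cons a w) x = J (cons a (wcons t w x)) * wP J t w x := by
  show J (wcons (t+1) (Fin.cons a w) x)
      * wP J t (fun i => (Fin.cons a w : Fin (t+1) → Fin d) i.succ) x = _
  rw [wcons_cons]
  simp only [Fin.cons_succ]

lemma dTheta_wcons (t : ℕ) (w : Fin t → Fin d) (x y : ℕ → Fin d) :
    dTheta θ (wcons t w x) (wcons t w y) = θ ^ t * dTheta θ x y := by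
  induction t with
  | zero => simp
  | succ t ih =>
    have : w = Fin.cons (w 0) (fun i => w i.succ) := by
      funext i; exact (Fin.cons_self_tail w ▸ rfl)
    rw [this, wcons_cons, wcons_cons, dTheta_cons, ih, pow_succ]
    ring

/-- Sum over words of length `t+1` decomposes via `Fin.cons`. -/
lemma sum_words_succ {Mo : Type*} [AddCommMonoid Mo] (t : ℕ) (g : (Fin (t+1) → Fin d) → Mo) :
    ∑ w : Fin (t+1) → Fin d, g w = ∑ a : Fin d, ∑ w : Fin t → Fin d, g (Fin.cons a w) := by
  rw [← (Fin.consEquiv (fun _ : Fin (t+1) => Fin d)).sum_comp g]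
  rw [Fintype.sum_prod_type]
  rfl

lemma wP_pos (hJpos : ∀ x, 0 < J x) (t : ℕ) (w : Fin t → Fin d) (x : ℕ → Fin d) :
    0 < wP J t w x := by
  induction t with
  | zero => exact one_pos
  | succ t ih =>
    show 0 < J (wcons (t+1) w x) * wP J t (fun i => w i.succ) x
    exact mul_pos (hJpos _) (ih _)

lemma wP_sum_one (hJnorm : ∀ x, ∑ a : Fin d, J (cons a x) = 1) (t : ℕ) (x : ℕ → Fin d) :
    ∑ w : Fin t → Fin d, wP J t w x = 1 := by
  induction t with
  | zero => simp [wP]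
  | succ t ih =>
    rw [sum_words_succ]
    have h1 : ∀ a : Fin d, ∑ w : Fin t → Fin d, wP J (t+1) (Fin.cons a w) x
        = ∑ w : Fin t → Fin d, J (cons a (wcons t w x)) * wP J t w x := by
      intro a; exact Finset.sum_congr rfl (fun w _ => wP_cons J t a w x)
    rw [Finset.sum_congr rfl (fun a _ => h1 a), Finset.sum_comm]
    have h2 : ∀ w : Fin t → Fin d, ∑ a : Fin d, J (cons a (wcons t w x)) * wP J t w x
        = wP J t w x := by
      intro w
      rw [← Finset.sum_mul, hJnorm (wcons t w x), one_mul]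
    rw [Finset.sum_congr rfl (fun w _ => h2 w), ih]

lemma wP_log_ratio (hJpos : ∀ x, 0 < J x) (M : ℝ)
    (hJlip : ∀ u v, |Real.log (J u) - Real.log (J v)| ≤ M * dTheta θ u v)
    (t : ℕ) (w : Fin t → Fin d) (x y : ℕ → Fin d) :
    |Real.log (wP J t w x) - Real.log (wP J t w y)|
      ≤ M * (∑ k ∈ Finset.range t, θ ^ (k+1)) * dTheta θ x y := by
  induction t with
  | zero => simp [wP]
  | succ t ih =>
    have hw : w = Fin.cons (w 0) (fun i => w i.succ) := by
      funext i; exact (Fin.cons_self_tail w ▸ rfl)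
    rw [hw, wP_cons, wP_cons]
    set a := w 0
    set w' : Fin t → Fin d := fun i => w i.succ
    rw [Real.log_mul (ne_of_gt (hJpos _)) (ne_of_gt (wP_pos J hJpos t w' x)),
        Real.log_mul (ne_of_gt (hJpos _)) (ne_of_gt (wP_pos J hJpos t w' y))]
    have h1 : |Real.log (J (cons a (wcons t w' x))) - Real.log (J (cons a (wcons t w' y)))|
        ≤ M * θ ^ (t+1) * dTheta θ x y := by
      have := hJlip (cons a (wcons t w' x)) (cons a (wcons t w' y))
      rw [dTheta_cons, dTheta_wcons] at this
      refine this.trans (le_of_eq (by ring))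
    calc |Real.log (J (cons a (wcons t w' x))) + Real.log (wP J t w' x)
          - (Real.log (J (cons a (wcons t w' y))) + Real.log (wP J t w' y))|
        ≤ |Real.log (J (cons a (wcons t w' x))) - Real.log (J (cons a (wcons t w' y)))|
          + |Real.log (wP J t w' x) - Real.log (wP J t w' y)| := by
          apply le_trans (le_of_eq (by ring_nf)) (abs_add_le _ _)
      _ ≤ M * θ ^ (t+1) * dTheta θ x y + M * (∑ k ∈ Finset.range t, θ ^ (k+1)) * dTheta θ x y :=
          add_le_add h1 (ih w')
      _ = M * (∑ k ∈ Finset.range (t+1), θ ^ (k+1)) * dTheta θ x y := by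
          rw [Finset.sum_range_succ]; ring

end words

section meas
variable {d : ℕ}

lemma measurable_cons (a : Fin d) : Measurable (cons a) := by
  apply measurable_pi_lambda
  intro n
  match n with
  | 0 => exact measurable_const
  | m+1 => exact measurable_pi_apply m

lemma continuous_J {θ : ℝ} (hθ0 : 0 < θ) (hθ1 : θ < 1)
    (J : (ℕ → Fin d) → ℝ) (hJpos : ∀ x, 0 < J x) (M : ℝ) (hM : 0 ≤ M)
    (hJlip : ∀ u v, |Real.log (J u) - Real.log (J v)| ≤ M * dTheta θ u v) :
    Continuous J := by
  have hlog : Continuous fun x => Real.log (J x) := by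
    rw [continuous_iff_continuousAt]
    intro x
    rw [ContinuousAt, Metric.tendsto_nhds]
    intro ε hε
    have : Filter.Tendsto (fun n : ℕ => M * θ ^ n) Filter.atTop (nhds (M * 0)) :=
      (tendsto_pow_atTop_nhds_zero_of_lt_one hθ0.le hθ1).const_mul M
    rw [mul_zero] at this
    obtain ⟨n, hn⟩ := (this.eventually (eventually_lt_nhds hε)).exists
    have hUopen : IsOpen {y : ℕ → Fin d | ∀ i ∈ Finset.range n, y i = x i} := by
      have : {y : ℕ → Fin d | ∀ i ∈ Finset.range n, y i = x i}
          = ⋂ i ∈ Finset.range n, (fun y : ℕ → Fin d => y i) ⁻¹' {x i} := by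
        ext y; simp
      rw [this]
      exact isOpen_biInter_finset fun i _ =>
        (continuous_apply i).isOpen_preimage _ (isOpen_discrete _)
    have hxU : x ∈ {y : ℕ → Fin d | ∀ i ∈ Finset.range n, y i = x i} := fun i _ => rfl
    refine Filter.eventually_of_mem (hUopen.mem_nhds hxU) ?_
    intro y hy
    rw [Real.dist_eq]
    calc |Real.log (J y) - Real.log (J x)| ≤ M * dTheta θ y x := hJlip y x
      _ ≤ M * θ ^ n := by
          refine mul_le_mul_of_nonneg_left ?_ hM
          exact dTheta_le_of_agree hθ0.le hθ1.le (fun i hi => hy i (Finset.mem_range.mpr hi))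
      _ < ε := hn
  have : J = fun x => Real.exp (Real.log (J x)) := by
    funext z; rw [Real.exp_log (hJpos z)]
  rw [this]
  exact Real.continuous_exp.comp hlog

lemma measurable_kernel (J : (ℕ → Fin d) → ℝ) (hJ : Measurable J) :
    Measurable (fun x => ∑ a : Fin d,
      ENNReal.ofReal (J (cons a x)) • Measure.dirac (cons a x)) := by
  apply Measure.measurable_of_measurable_coe
  intro s hs
  have : (fun x => (∑ a : Fin d,
      ENNReal.ofReal (J (cons a x)) • Measure.dirac (cons a x)) s)
      = fun x => ∑ a : Fin d, ENNReal.ofReal (J (cons a x)) * s.indicator 1 (cons a x) := by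
    funext x
    rw [Measure.finset_sum_apply]
    exact Finset.sum_congr rfl fun a _ => by
      rw [Measure.smul_apply, Measure.dirac_apply' _ hs, smul_eq_mul]
  rw [this]
  apply Finset.measurable_sum
  intro a _
  exact ((ENNReal.measurable_ofReal.comp (hJ.comp (measurable_cons a))).mul
    ((measurable_one.indicator hs).comp (measurable_cons a)))

lemma bind_sum_smul_dirac {ι : Type*} (s : Finset ι) (c : ι → ENNReal) (z : ι → (ℕ → Fin d))
    (f : (ℕ → Fin d) → Measure (ℕ → Fin d)) (hf : Measurable f) :
    ((∑ i ∈ s, c i • Measure.dirac (z i)).bind f) = ∑ i ∈ s, c i • f (z i) := by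
  ext A hA
  rw [Measure.bind_apply hA hf.aemeasurable, lintegral_finset_sum_measure,
      Measure.finset_sum_apply]
  refine Finset.sum_congr rfl fun i _ => ?_
  rw [lintegral_smul_measure,
      lintegral_dirac' _ (show Measurable fun a => (f a) A from (Measure.measurable_coe hA).comp hf),
      Measure.smul_apply, smul_eq_mul]

lemma iterate_dualRuelle (J : (ℕ → Fin d) → ℝ) (hJ : Measurable J) (hJpos : ∀ x, 0 < J x)
    (t : ℕ) (x : ℕ → Fin d) :
    (dualRuelle J)^[t] (Measure.dirac x)
      = ∑ w : Fin t → Fin d, ENNReal.ofReal (wP J t w x) • Measure.dirac (wcons t w x) := by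
  induction t with
  | zero =>
    simp only [Function.iterate_zero, id_eq]
    rw [Finset.sum_congr rfl fun w _ => by rw [show wP J 0 w x = 1 from rfl, wcons_zero]]
    simp
  | succ t ih =>
    rw [Function.iterate_succ_apply', ih]
    show (∑ w : Fin t → Fin d, ENNReal.ofReal (wP J t w x) • Measure.dirac (wcons t w x)).bind _ = _
    rw [bind_sum_smul_dirac _ _ _ _ (measurable_kernel J hJ)]
    rw [sum_words_succ t (fun w => ENNReal.ofReal (wP J (t+1) w x) • Measure.dirac (wcons (t+1) w x))]
    rw [Finset.sum_comm]
    refine Finset.sum_congr rfl fun w _ => ?_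
    rw [Finset.smul_sum]
    refine Finset.sum_congr rfl fun a _ => ?_
    rw [wP_cons, wcons_cons, smul_smul, ← ENNReal.ofReal_mul (le_of_lt (wP_pos J hJpos t w x)),
        mul_comm (wP J t w x)]

end meas

section meas2
variable {d : ℕ} {θ : ℝ}

abbrev Om (d : ℕ) := ℕ → Fin d

lemma measurableSet_agree (i : ℕ) : MeasurableSet {p : Om d × Om d | p.1 i = p.2 i} := by
  have : {p : Om d × Om d | p.1 i = p.2 i}
      = ⋃ c : Fin d, ((fun p : Om d × Om d => p.1 i) ⁻¹' {c})
          ∩ ((fun p : Om d × Om d => p.2 i) ⁻¹' {c}) := by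
    ext p
    constructor
    · intro h; exact Set.mem_iUnion.mpr ⟨p.2 i, h, rfl⟩
    · intro h
      obtain ⟨c, hc⟩ := Set.mem_iUnion.mp h
      exact hc.1.trans hc.2.symm
  rw [this]
  exact MeasurableSet.iUnion fun c =>
    (((measurable_pi_apply i).comp measurable_fst) (measurableSet_singleton c)).inter
    (((measurable_pi_apply i).comp measurable_snd) (measurableSet_singleton c))

lemma measurable_dTheta_pair : Measurable (fun p : Om d × Om d => dTheta θ p.1 p.2) := by
  intro t _
  classical
  set A : ℕ → Set (Om d × Om d) :=
    fun n => {p | (∀ i < n, p.1 i = p.2 i) ∧ ¬ p.1 n = p.2 n} with hA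
  have hAmeas : ∀ n, MeasurableSet (A n) := by
    intro n
    have : A n = (⋂ i ∈ Finset.range n, {p : Om d × Om d | p.1 i = p.2 i})
        ∩ {p : Om d × Om d | p.1 n = p.2 n}ᶜ := by
      ext p; simp [hA]
    rw [this]
    exact (MeasurableSet.biInter (Finset.range n).countable_toSet
      (fun i _ => measurableSet_agree i)).inter (measurableSet_agree n).compl
  have hdiag : MeasurableSet {p : Om d × Om d | p.1 = p.2} := by
    have : {p : Om d × Om d | p.1 = p.2} = ⋂ i : ℕ, {p : Om d × Om d | p.1 i = p.2 i} := by
      ext p; simp [funext_iff]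
    rw [this]
    exact MeasurableSet.iInter fun i => measurableSet_agree i
  have key : (fun p : Om d × Om d => dTheta θ p.1 p.2) ⁻¹' t
      = (⋃ n ∈ {n : ℕ | θ ^ n ∈ t}, A n)
        ∪ ({p : Om d × Om d | p.1 = p.2} ∩ (if (0:ℝ) ∈ t then Set.univ else ∅)) := by
    ext p
    simp only [Set.mem_preimage, Set.mem_union, Set.mem_inter_iff, Set.mem_iUnion, Set.mem_setOf_eq]
    by_cases h : p.1 = p.2
    · have hd : dTheta θ p.1 p.2 = 0 := by simp [dTheta, h]
      rw [hd]
      constructor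
      · intro h0
        right; exact ⟨h, by rw [if_pos h0]; trivial⟩
      · rintro (⟨n, hn, hmem⟩ | ⟨_, hif⟩)
        · exact absurd (congrFun h n) hmem.2
        · by_cases h0 : (0:ℝ) ∈ t
          · exact h0
          · rw [if_neg h0] at hif; exact hif.elim
    · have hd : dTheta θ p.1 p.2 = θ ^ Nat.find (Function.ne_iff.mp h) := by
        simp only [dTheta]; rw [dif_neg h]
      rw [hd]
      constructor
      · intro hmem
        left
        exact ⟨Nat.find (Function.ne_iff.mp h), hmem,
          fun i hi => not_not.mp (Nat.find_min (Function.ne_iff.mp h) hi),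
          Nat.find_spec (Function.ne_iff.mp h)⟩
      · rintro (⟨n, hn, hfirst, hlast⟩ | ⟨heq, _⟩)
        · have : n = Nat.find (Function.ne_iff.mp h) := by
            rw [eq_comm, Nat.find_eq_iff]
            exact ⟨hlast, fun m hm hne => hne (hfirst m hm)⟩
          rwa [← this]
        · exact absurd heq h
  rw [key]
  refine ((MeasurableSet.biUnion (Set.to_countable _) fun n _ => hAmeas n).union
    (hdiag.inter ?_))
  by_cases h0 : (0:ℝ) ∈ t
  · rw [if_pos h0]; exact MeasurableSet.univ
  · rw [if_neg h0]; exact MeasurableSet.empty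

lemma map_finset_sum' {ι α β : Type*} [MeasurableSpace α] [MeasurableSpace β]
    (s : Finset ι) (μ : ι → Measure α) {f : α → β} (hf : Measurable f) :
    (∑ i ∈ s, μ i).map f = ∑ i ∈ s, (μ i).map f := by
  classical
  induction s using Finset.induction with
  | empty => simp
  | insert _ _ hnotmem ih =>
    rw [Finset.sum_insert hnotmem, Finset.sum_insert hnotmem, Measure.map_add _ _ hf, ih]

lemma integrable_smul_dirac {α : Type*} [MeasurableSpace α] [MeasurableSingletonClass α]
    {f : α → ℝ} (hf : Measurable f) (c : ENNReal) (hc : c ≠ ⊤) (z : α) :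
    Integrable f (c • Measure.dirac z) := by
  constructor
  · exact hf.aestronglyMeasurable
  · show (∫⁻ a, ‖f a‖₊ ∂(c • Measure.dirac z)) < ⊤
    rw [lintegral_smul_measure, lintegral_dirac' _ (hf.nnnorm.coe_nnreal_ennreal)]
    exact ENNReal.mul_lt_top hc.lt_top ENNReal.coe_lt_top

lemma integral_finsum_smul_dirac {α ι : Type*} [MeasurableSpace α] [MeasurableSingletonClass α]
    (s : Finset ι) (c : ι → ℝ) (hc : ∀ i ∈ s, 0 ≤ c i) (z : ι → α)
    {f : α → ℝ} (hf : Measurable f) :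
    ∫ a, f a ∂(∑ i ∈ s, ENNReal.ofReal (c i) • Measure.dirac (z i))
      = ∑ i ∈ s, c i * f (z i) := by
  rw [integral_finset_sum_measure
    (fun i _ => integrable_smul_dirac hf _ ENNReal.ofReal_ne_top (z i))]
  refine Finset.sum_congr rfl fun i hi => ?_
  rw [integral_smul_measure, integral_dirac, smul_eq_mul, ENNReal.toReal_ofReal (hc i hi)]

end meas2

set_option maxHeartbeats 1000000 in
/-- for a normalized `d_θ`-Lipschitz potential `log J` there are `δ > 0`,
`t ≥ 1` and `α ∈ (0,1)` such that, with the equivalent metric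
`d(x,y) = min{1, δ⁻¹ d_θ(x,y)}`, one has
`W₁((ℒ*)ᵗ(δ_x), (ℒ*)ᵗ(δ_y)) ≤ α d(x,y)` for all `x, y`. -/
theorem dualRuelle_contracts_on_diracs
    (d : ℕ) (θ : ℝ) (hθ0 : 0 < θ) (hθ1 : θ < 1)
    (J : (ℕ → Fin d) → ℝ) (hJpos : ∀ x, 0 < J x)
    (M : ℝ) (hJlip : ∀ u v, |Real.log (J u) - Real.log (J v)| ≤ M * dTheta θ u v)
    (hJnorm : ∀ x, ∑ a : Fin d, J (cons a x) = 1) :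
    ∃ (δ : ℝ) (t : ℕ) (α : ℝ), 0 < δ ∧ 1 ≤ t ∧ 0 < α ∧ α < 1 ∧
      ∀ x y : ℕ → Fin d,
        Wcost (fun p => min 1 (δ⁻¹ * dTheta θ p.1 p.2))
            ((dualRuelle J)^[t] (Measure.dirac x))
            ((dualRuelle J)^[t] (Measure.dirac y)) ≤
          α * min 1 (δ⁻¹ * dTheta θ x y) := by
  classical
  set M' := max M 0 with hM'def
  have hM'0 : 0 ≤ M' := le_max_right _ _
  have hlip' : ∀ u v, |Real.log (J u) - Real.log (J v)| ≤ M' * dTheta θ u v := fun u v =>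
    (hJlip u v).trans (mul_le_mul_of_nonneg_right (le_max_left _ _) (dTheta_nonneg hθ0.le u v))
  obtain ⟨C, hCdef⟩ : ∃ C : ℝ, C = M' * θ / (1 - θ) := ⟨_, rfl⟩
  have hC0 : 0 ≤ C := hCdef ▸ div_nonneg (mul_nonneg hM'0 hθ0.le) (by linarith)
  obtain ⟨ε, hεdef⟩ : ∃ ε : ℝ, ε = Real.exp (-C) := ⟨_, rfl⟩
  have hε0 : 0 < ε := hεdef ▸ Real.exp_pos _
  have hε1 : ε ≤ 1 := by
    rw [hεdef, ← Real.exp_zero]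
    exact Real.exp_le_exp.mpr (by linarith)
  obtain ⟨δ, hδdef⟩ : ∃ δ : ℝ, δ = ε / (4 * C + 4) := ⟨_, rfl⟩
  have hδ0 : 0 < δ := hδdef ▸ div_pos hε0 (by linarith)
  have hδε4 : δ ≤ ε / 4 := by
    rw [hδdef]
    apply div_le_div_of_nonneg_left hε0.le (by norm_num) (by linarith)
  have hCδ : C * δ ≤ ε / 4 := by
    rw [hδdef, ← mul_div_assoc, div_le_div_iff₀ (by linarith) (by norm_num)]
    nlinarith
  obtain ⟨n, hn⟩ := exists_pow_lt_of_lt_one (mul_pos hδ0 (by linarith : (0:ℝ) < ε / 2)) hθ1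
  obtain ⟨t, htdef⟩ : ∃ t : ℕ, t = max n 1 := ⟨_, rfl⟩
  have ht1 : 1 ≤ t := htdef ▸ le_max_right _ _
  have hθt : θ ^ t ≤ δ * (ε / 2) := by
    rw [htdef]
    exact (pow_le_pow_of_le_one hθ0.le hθ1.le (le_max_left n 1)).trans hn.le
  have hθt0 : 0 ≤ θ ^ t := pow_nonneg hθ0.le t
  obtain ⟨α, hαdef⟩ : ∃ α : ℝ, α = 1 - ε / 2 := ⟨_, rfl⟩
  refine ⟨δ, t, α, hδ0, ht1, by rw [hαdef]; linarith, by rw [hαdef]; linarith, ?_⟩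
  intro x y
  have hJmeas : Measurable J := (continuous_J hθ0 hθ1 J hJpos M' hM'0 hlip').measurable
  let W := (Fin t → Fin d)
  set p : W → ℝ := fun w => wP J t w x with hpdef
  set q : W → ℝ := fun w => wP J t w y with hqdef
  set m : W → ℝ := fun w => min (p w) (q w) with hmdef
  have hp_pos : ∀ w, 0 < p w := fun w => wP_pos J hJpos t w x
  have hq_pos : ∀ w, 0 < q w := fun w => wP_pos J hJpos t w y
  have hm0 : ∀ w, 0 ≤ m w := fun w => le_min (hp_pos w).le (hq_pos w).le
  have hm_le_p : ∀ w, m w ≤ p w := fun w => min_le_left _ _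
  have hm_le_q : ∀ w, m w ≤ q w := fun w => min_le_right _ _
  have hsum_p : ∑ w : W, p w = 1 := wP_sum_one J hJnorm t x
  have hsum_q : ∑ w : W, q w = 1 := wP_sum_one J hJnorm t y
  obtain ⟨s₀, hs₀def⟩ : ∃ s₀ : ℝ, s₀ = ∑ w : W, m w := ⟨_, rfl⟩
  obtain ⟨r, hrdef⟩ : ∃ r : ℝ, r = 1 - s₀ := ⟨_, rfl⟩
  have hs₀1 : s₀ ≤ 1 := by
    rw [hs₀def, ← hsum_p]
    exact Finset.sum_le_sum fun w _ => hm_le_p w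
  have hr0 : 0 ≤ r := by rw [hrdef]; linarith
  have hsum_pm : ∑ w : W, (p w - m w) = r := by
    rw [Finset.sum_sub_distrib, hsum_p, hrdef, hs₀def]
  have hsum_qm : ∑ w : W, (q w - m w) = r := by
    rw [Finset.sum_sub_distrib, hsum_q, hrdef, hs₀def]
  obtain ⟨dxy, hdxydef⟩ : ∃ dxy : ℝ, dxy = dTheta θ x y := ⟨_, rfl⟩
  have hd0 : 0 ≤ dxy := hdxydef ▸ dTheta_nonneg hθ0.le x y
  have hd1 : dxy ≤ 1 := hdxydef ▸ dTheta_le_one hθ0.le hθ1.le x y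
  -- log ratio and overlap bound
  have hgeom : M' * (∑ k ∈ Finset.range t, θ ^ (k+1)) ≤ C := by
    have h1 : (∑ k ∈ Finset.range t, θ ^ (k+1)) = θ * ∑ k ∈ Finset.range t, θ ^ k := by
      rw [Finset.mul_sum]
      exact Finset.sum_congr rfl fun k _ => by ring
    have h2 : (∑ k ∈ Finset.range t, θ ^ k) ≤ 1 / (1 - θ) := by
      rw [geom_sum_eq (ne_of_lt hθ1) t]
      rw [show (θ ^ t - 1) / (θ - 1) = (1 - θ ^ t) / (1 - θ) by
        rw [div_eq_div_iff (by linarith) (by linarith)]; ring]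
      rw [div_le_div_iff_of_pos_right (by linarith)]
      nlinarith [pow_nonneg hθ0.le t]
    rw [h1, hCdef, div_eq_mul_one_div]
    calc M' * (θ * ∑ k ∈ Finset.range t, θ ^ k) ≤ M' * (θ * (1 / (1 - θ))) := by
          apply mul_le_mul_of_nonneg_left _ hM'0
          exact mul_le_mul_of_nonneg_left h2 hθ0.le
      _ = M' * θ * (1 / (1 - θ)) := by ring
  have hlogpq : ∀ w : W, |Real.log (p w) - Real.log (q w)| ≤ C * dxy := by
    intro w
    rw [hdxydef]
    refine (wP_log_ratio J θ hJpos M' hlip' t w x y).trans ?_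
    exact mul_le_mul_of_nonneg_right hgeom (dTheta_nonneg hθ0.le x y)
  have hover : ∀ w : W, Real.exp (-(C * dxy)) * p w ≤ m w := by
    intro w
    have h1 : Real.log (q w) ≥ Real.log (p w) - C * dxy := by
      have := abs_le.mp (hlogpq w); linarith [this.1, this.2]
    have h2 : Real.exp (-(C * dxy)) * p w ≤ q w := by
      calc Real.exp (-(C * dxy)) * p w = Real.exp (Real.log (p w) - C * dxy) := by
            rw [Real.exp_sub, Real.exp_log (hp_pos w), Real.exp_neg]; ring
        _ ≤ Real.exp (Real.log (q w)) := Real.exp_le_exp.mpr (by linarith)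
        _ = q w := Real.exp_log (hq_pos w)
    have h3 : Real.exp (-(C * dxy)) * p w ≤ p w := by
      have : Real.exp (-(C * dxy)) ≤ 1 := by
        rw [← Real.exp_zero]
        exact Real.exp_le_exp.mpr (by nlinarith)
      nlinarith [(hp_pos w).le]
    exact le_min h3 h2
  have hs₀_ge : Real.exp (-(C * dxy)) ≤ s₀ := by
    calc Real.exp (-(C * dxy)) = Real.exp (-(C * dxy)) * ∑ w : W, p w := by rw [hsum_p, mul_one]
      _ = ∑ w : W, Real.exp (-(C * dxy)) * p w := by rw [Finset.mul_sum]
      _ ≤ ∑ w : W, m w := Finset.sum_le_sum fun w _ => hover w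
      _ = s₀ := hs₀def.symm
  have hr_le : r ≤ C * dxy := by
    have := Real.add_one_le_exp (-(C * dxy))
    rw [hrdef]; linarith
  have hr_le' : r ≤ 1 - ε := by
    have h1 : ε ≤ Real.exp (-(C * dxy)) := by
      rw [hεdef]
      exact Real.exp_le_exp.mpr (by nlinarith)
    rw [hrdef]; linarith
  -- the coupling
  set Zx : W → (ℕ → Fin d) := fun w => wcons t w x with hZxdef
  set Zy : W → (ℕ → Fin d) := fun w => wcons t w y with hZydef
  set coeff : W × W → ℝ := fun u => (p u.1 - m u.1) * (q u.2 - m u.2) / r with hcoeffdef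
  have hcoeff0 : ∀ u, 0 ≤ coeff u := fun u =>
    div_nonneg (mul_nonneg (by linarith [hm_le_p u.1]) (by linarith [hm_le_q u.2])) hr0
  have hcoeffsum1 : ∀ w : W, ∑ w' : W, coeff (w, w') = p w - m w := by
    intro w
    by_cases hr : r = 0
    · have hpm : ∀ w : W, p w - m w = 0 := by
        have hall := (Finset.sum_eq_zero_iff_of_nonneg
          (fun w _ => by linarith [hm_le_p w] : ∀ w ∈ Finset.univ, 0 ≤ p w - m w)).mp
          (by rw [hsum_pm, hr])
        exact fun w => hall w (Finset.mem_univ w)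
      rw [hpm w]
      apply Finset.sum_eq_zero
      intro w' _
      show (p w - m w) * (q w' - m w') / r = 0
      rw [hpm w, zero_mul, zero_div]
    · show ∑ w' : W, (p w - m w) * (q w' - m w') / r = p w - m w
      rw [← Finset.sum_div, ← Finset.mul_sum, hsum_qm, mul_div_assoc, div_self hr, mul_one]
  have hcoeffsum2 : ∀ w' : W, ∑ w : W, coeff (w, w') = q w' - m w' := by
    intro w'
    by_cases hr : r = 0
    · have hqm : ∀ w : W, q w - m w = 0 := by
        have hall := (Finset.sum_eq_zero_iff_of_nonneg
          (fun w _ => by linarith [hm_le_q w] : ∀ w ∈ Finset.univ, 0 ≤ q w - m w)).mp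
          (by rw [hsum_qm, hr])
        exact fun w => hall w (Finset.mem_univ w)
      rw [hqm w']
      apply Finset.sum_eq_zero
      intro w _
      show (p w - m w) * (q w' - m w') / r = 0
      rw [hqm w', mul_zero, zero_div]
    · show ∑ w : W, (p w - m w) * (q w' - m w') / r = q w' - m w'
      rw [← Finset.sum_div, ← Finset.sum_mul, hsum_pm, mul_comm, mul_div_assoc, div_self hr,
        mul_one]
  have hcoeff_total : ∑ u : W × W, coeff u = r := by
    rw [Fintype.sum_prod_type]
    calc ∑ w : W, ∑ w' : W, coeff (w, w') = ∑ w : W, (p w - m w) :=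
          Finset.sum_congr rfl fun w _ => hcoeffsum1 w
      _ = r := hsum_pm
  set Γ : Measure ((ℕ → Fin d) × (ℕ → Fin d)) :=
    (∑ w : W, ENNReal.ofReal (m w) • Measure.dirac (Zx w, Zy w))
      + ∑ u : W × W, ENNReal.ofReal (coeff u) • Measure.dirac (Zx u.1, Zy u.2) with hΓdef
  have hiterx := iterate_dualRuelle J hJmeas hJpos t x
  have hitery := iterate_dualRuelle J hJmeas hJpos t y
  -- marginals
  have hfst : Γ.map Prod.fst = (dualRuelle J)^[t] (Measure.dirac x) := by
    rw [hiterx, hΓdef, Measure.map_add _ _ measurable_fst,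
      map_finset_sum' _ _ measurable_fst, map_finset_sum' _ _ measurable_fst]
    simp only [Measure.map_smul, Measure.map_dirac' measurable_fst]
    rw [Fintype.sum_prod_type]
    have hgrp : ∀ w : W, ∑ w' : W,
        ENNReal.ofReal (coeff (w, w')) • (Measure.dirac (Zx w) : Measure (ℕ → Fin d))
        = ENNReal.ofReal (p w - m w) • Measure.dirac (Zx w) := by
      intro w
      rw [← Finset.sum_smul, ← ENNReal.ofReal_sum_of_nonneg (fun i _ => hcoeff0 _),
        hcoeffsum1 w]
    rw [Finset.sum_congr rfl fun w _ => hgrp w, ← Finset.sum_add_distrib]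
    refine Finset.sum_congr rfl fun w _ => ?_
    rw [← add_smul, ← ENNReal.ofReal_add (hm0 w) (by linarith [hm_le_p w])]
    congr 2
    ring
  have hsnd : Γ.map Prod.snd = (dualRuelle J)^[t] (Measure.dirac y) := by
    rw [hitery, hΓdef, Measure.map_add _ _ measurable_snd,
      map_finset_sum' _ _ measurable_snd, map_finset_sum' _ _ measurable_snd]
    simp only [Measure.map_smul, Measure.map_dirac' measurable_snd]
    rw [Fintype.sum_prod_type, Finset.sum_comm]
    have hgrp : ∀ w' : W, ∑ w : W,
        ENNReal.ofReal (coeff (w, w')) • (Measure.dirac (Zy w') : Measure (ℕ → Fin d))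
        = ENNReal.ofReal (q w' - m w') • Measure.dirac (Zy w') := by
      intro w'
      rw [← Finset.sum_smul, ← ENNReal.ofReal_sum_of_nonneg (fun i _ => hcoeff0 _),
        hcoeffsum2 w']
    rw [Finset.sum_congr rfl fun w' _ => hgrp w', ← Finset.sum_add_distrib]
    refine Finset.sum_congr rfl fun w _ => ?_
    rw [← add_smul, ← ENNReal.ofReal_add (hm0 w) (by linarith [hm_le_q w])]
    congr 2
    ring
  -- the cost and its integral
  set c : ((ℕ → Fin d) × (ℕ → Fin d)) → ℝ := fun p' => min 1 (δ⁻¹ * dTheta θ p'.1 p'.2)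
    with hcdef
  have hcmeas : Measurable c :=
    measurable_const.min (measurable_const.mul measurable_dTheta_pair)
  have hc0 : ∀ p', 0 ≤ c p' := fun p' =>
    le_min zero_le_one (mul_nonneg (inv_nonneg.mpr hδ0.le) (dTheta_nonneg hθ0.le _ _))
  have hc1 : ∀ p', c p' ≤ 1 := fun p' => min_le_left _ _
  have hint : ∫ p', c p' ∂Γ
      = ∑ w : W, m w * c (Zx w, Zy w) + ∑ u : W × W, coeff u * c (Zx u.1, Zy u.2) := by
    rw [hΓdef, integral_add_measure]
    · congr 1
      · exact integral_finsum_smul_dirac _ _ (fun w _ => hm0 w) _ hcmeas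
      · exact integral_finsum_smul_dirac _ _ (fun u _ => hcoeff0 u) _ hcmeas
    · exact (integrable_finset_sum_measure.mpr
        (fun w _ => integrable_smul_dirac hcmeas _ ENNReal.ofReal_ne_top _))
    · exact (integrable_finset_sum_measure.mpr
        (fun u _ => integrable_smul_dirac hcmeas _ ENNReal.ofReal_ne_top _))
  set cmin := min 1 (δ⁻¹ * (θ ^ t * dxy)) with hcmindef
  have hcmin0 : 0 ≤ cmin :=
    le_min zero_le_one (mul_nonneg (inv_nonneg.mpr hδ0.le) (mul_nonneg hθt0 hd0))
  have hcost_diag : ∀ w : W, c (Zx w, Zy w) = cmin := by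
    intro w
    rw [hcdef]
    show min 1 (δ⁻¹ * dTheta θ (Zx w) (Zy w)) = cmin
    rw [hZxdef, hZydef]
    show min 1 (δ⁻¹ * dTheta θ (wcons t w x) (wcons t w y)) = cmin
    rw [dTheta_wcons, hcmindef, hdxydef]
  have hbound : ∫ p', c p' ∂Γ ≤ s₀ * cmin + r := by
    rw [hint]
    have hterm1 : ∑ w : W, m w * c (Zx w, Zy w) = s₀ * cmin := by
      rw [Finset.sum_congr rfl fun w _ => by rw [hcost_diag w], ← Finset.sum_mul, ← hs₀def]
    have hterm2 : ∑ u : W × W, coeff u * c (Zx u.1, Zy u.2) ≤ r := by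
      calc ∑ u : W × W, coeff u * c (Zx u.1, Zy u.2) ≤ ∑ u : W × W, coeff u * 1 :=
            Finset.sum_le_sum fun u _ => mul_le_mul_of_nonneg_left (hc1 _) (hcoeff0 u)
        _ = r := by rw [← hcoeff_total]; exact Finset.sum_congr rfl fun u _ => mul_one _
    rw [hterm1]
    linarith
  -- Wcost is at most the integral over Γ
  have hW : Wcost c ((dualRuelle J)^[t] (Measure.dirac x)) ((dualRuelle J)^[t] (Measure.dirac y))
      ≤ ∫ p', c p' ∂Γ := by
    apply csInf_le
    · refine ⟨0, ?_⟩
      rintro r' ⟨Γ', -, -, rfl⟩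
      exact integral_nonneg hc0
    · exact ⟨Γ, hfst, hsnd, rfl⟩
  -- final arithmetic
  have hfinal : s₀ * cmin + r ≤ α * min 1 (δ⁻¹ * dxy) := by
    by_cases hcase : dxy ≤ δ
    · have hmin : min 1 (δ⁻¹ * dxy) = δ⁻¹ * dxy := by
        apply min_eq_right
        rw [inv_mul_le_iff₀ hδ0, mul_one]
        exact hcase
      rw [hmin]
      have h1 : s₀ * cmin ≤ δ⁻¹ * (θ ^ t * dxy) := by
        calc s₀ * cmin ≤ 1 * cmin := mul_le_mul_of_nonneg_right hs₀1 hcmin0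
          _ = cmin := one_mul _
          _ ≤ δ⁻¹ * (θ ^ t * dxy) := min_le_right _ _
      have hkey : θ ^ t + C * δ ≤ α := by
        rw [hαdef]
        have h8 : θ ^ t ≤ ε / 8 := by nlinarith [hθt, hδε4, hε0.le, hε1]
        linarith
      have h2 : δ⁻¹ * (θ ^ t * dxy) + C * dxy ≤ α * (δ⁻¹ * dxy) := by
        rw [show δ⁻¹ * (θ ^ t * dxy) + C * dxy = (θ ^ t + C * δ) * (δ⁻¹ * dxy)
            + C * dxy * (1 - δ * δ⁻¹) by field_simp; ring]
        rw [mul_inv_cancel₀ (ne_of_gt hδ0), sub_self, mul_zero, add_zero]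
        exact mul_le_mul_of_nonneg_right hkey (mul_nonneg (inv_nonneg.mpr hδ0.le) hd0)
      linarith
    · push_neg at hcase
      have hmin : min 1 (δ⁻¹ * dxy) = 1 := by
        apply min_eq_left
        rw [← inv_mul_cancel₀ (ne_of_gt hδ0)]
        exact mul_le_mul_of_nonneg_left hcase.le (inv_nonneg.mpr hδ0.le)
      rw [hmin, mul_one]
      have h1 : s₀ * cmin ≤ ε / 2 := by
        have hcm : cmin ≤ ε / 2 := by
          calc cmin ≤ δ⁻¹ * (θ ^ t * dxy) := min_le_right _ _
            _ ≤ δ⁻¹ * (δ * (ε / 2) * 1) := by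
                apply mul_le_mul_of_nonneg_left _ (inv_nonneg.mpr hδ0.le)
                calc θ ^ t * dxy ≤ (δ * (ε / 2)) * dxy := mul_le_mul_of_nonneg_right hθt hd0
                  _ ≤ δ * (ε / 2) * 1 :=
                      mul_le_mul_of_nonneg_left hd1 (by positivity)
            _ = ε / 2 := by field_simp
        calc s₀ * cmin ≤ 1 * cmin := mul_le_mul_of_nonneg_right hs₀1 hcmin0
          _ = cmin := one_mul _
          _ ≤ ε / 2 := hcm
      rw [hαdef]
      linarith
  calc Wcost c ((dualRuelle J)^[t] (Measure.dirac x)) ((dualRuelle J)^[t] (Measure.dirac y))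
      ≤ ∫ p', c p' ∂Γ := hW
    _ ≤ s₀ * cmin + r := hbound
    _ ≤ α * min 1 (δ⁻¹ * dxy) := hfinal
    _ = α * min 1 (δ⁻¹ * dTheta θ x y) := by rw [hdxydef]
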